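/- Let the perceptron with dynamic margin run with accuracy 0 < ε < 1/2: a₀ = 0, a_{t+1} = a_t + y_{k(t)} where updates satisfy a_t·y_{k(t)} ≤ (1−ε)‖a_t‖²/t (threshold 0 at t=0), ‖y_k‖ ≤ R, and a unit vector u satisfies u·y_k ≥ γ_d > 0 for all k. Then for any integers t ≥ N ≥ 1, writing α_N = ‖a_N‖/(R·N) ≤ 1, the number of updates satisfies t^{2ε} ≤ α_N²·(R²/γ_d²)·N^{2ε}·{1 + (α_N^{−2}N^{−1}/(2ε−1))·((t/N)^{2ε−1} − 1)}; in particular t ≤ N·(α_N·R/γ_d)^{1/ε}·(1 + α_N^{−2}N^{−1}/(1−2ε))^{1/(2ε)}. -/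

import Mathlib

open scoped InnerProductSpace

lemma pdm_keyK {T δ : ℝ} (hT : 1 ≤ T) (hδ : 1 ≤ δ) :
    T ^ δ + δ * T ^ (δ - 1) ≤ (T + 1) ^ δ := by
  have hT0 : (0:ℝ) < T := by linarith
  have hb := one_add_mul_self_le_rpow_one_add (s := 1/T) (by nlinarith [one_div_pos.mpr hT0]) hδ
  have h1 : (1 + 1/T) = (T+1)/T := by field_simp
  rw [h1, Real.div_rpow (by linarith) hT0.le] at hb
  have hTd : (0:ℝ) < T ^ δ := Real.rpow_pos_of_pos hT0 δ
  have h3 : T ^ (δ - 1) = T ^ δ / T := Real.rpow_sub_one (ne_of_gt hT0) δ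
  have hmul := mul_le_mul_of_nonneg_left hb hTd.le
  have e1 : T^δ * (1 + δ*(1/T)) = T^δ + δ*(T^δ/T) := by field_simp
  have e2 : T^δ * ((T+1)^δ/T^δ) = (T+1)^δ := by field_simp
  rw [h3]; rw [e1, e2] at hmul; linarith

lemma pdm_aux_ind {ε R X : ℝ} (hε : 0 < ε) (hε2 : ε < 1/2) (hXnn : 0 ≤ X)
    (b : ℕ → ℝ) (N : ℕ) (hN : 1 ≤ N) (hbN : b N = X)
    (hrec : ∀ t : ℕ, N ≤ t → b (t+1) ≤ b t * (1 + (2 - 2*ε)/(t:ℝ)) + R^2) :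
    ∀ t : ℕ, N ≤ t → b t ≤ X * ((t:ℝ)/(N:ℝ)) ^ (2-2*ε)
      + R^2 * ((N:ℝ)^(2*ε-1) * (t:ℝ)^(2-2*ε) - (t:ℝ)) / (1-2*ε) := by
  have hN0 : (0:ℝ) < N := by exact_mod_cast hN
  intro t ht
  induction t, ht using Nat.le_induction with
  | base =>
    have e1 : ((N:ℝ)/(N:ℝ)) = 1 := div_self (ne_of_gt hN0)
    have e2 : (N:ℝ)^(2*ε-1) * (N:ℝ)^(2-2*ε) = (N:ℝ) := by
      rw [← Real.rpow_add hN0]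
      norm_num
    rw [e1, e2, Real.one_rpow]
    simp [hbN]
  | succ t ht ih =>
    have hT1 : (1:ℝ) ≤ (t:ℝ) := by exact_mod_cast le_trans hN ht
    have hT0 : (0:ℝ) < (t:ℝ) := by linarith
    have hδ1 : (1:ℝ) ≤ 2 - 2*ε := by linarith
    have hη : (0:ℝ) < 1 - 2*ε := by linarith
    have hc : (0:ℝ) < (N:ℝ)^(2*ε-1) := Real.rpow_pos_of_pos hN0 _
    have hM : (0:ℝ) < (N:ℝ)^(2-2*ε) := Real.rpow_pos_of_pos hN0 _
    have hK := pdm_keyK hT1 hδ1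
    have hA : (t:ℝ)^(2-2*ε) = (t:ℝ)^(2-2*ε-1) * (t:ℝ) := by
      rw [Real.rpow_sub_one (ne_of_gt hT0)]; field_simp
    have hDiv : ((t:ℝ)/(N:ℝ))^(2-2*ε) = (t:ℝ)^(2-2*ε)/(N:ℝ)^(2-2*ε) :=
      Real.div_rpow hT0.le hN0.le _
    have hDiv1 : (((t:ℝ)+1)/(N:ℝ))^(2-2*ε) = ((t:ℝ)+1)^(2-2*ε)/(N:ℝ)^(2-2*ε) :=
      Real.div_rpow (by linarith) hN0.le _
    have hstep := hrec t ht
    have hpos : (0:ℝ) ≤ 1 + (2-2*ε)/(t:ℝ) := by positivity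
    have h2 := mul_le_mul_of_nonneg_right ih hpos
    set P := (t:ℝ)^(2-2*ε-1) with hP
    set Q := ((t:ℝ)+1)^(2-2*ε) with hQ
    set c := (N:ℝ)^(2*ε-1) with hcdef
    set M := (N:ℝ)^(2-2*ε) with hMdef
    rw [hA] at hK hDiv
    have hKey : P * (t:ℝ) + (2-2*ε) * P ≤ Q := by
      have : (2-2*ε) * (t:ℝ)^(2-2*ε-1) = (2-2*ε) * P := by rw [hP]
      linarith [hK]
    have hLHSeq : (X * ((t:ℝ)^(2-2*ε-1) * (t:ℝ) / M) + R^2 * (c * ((t:ℝ)^(2-2*ε-1) * (t:ℝ)) - (t:ℝ)) / (1-2*ε)) * (1 + (2-2*ε)/(t:ℝ)) + R^2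
        = X * ((P * (t:ℝ) + (2-2*ε)*P)/M) + R^2 * (c * (P * (t:ℝ) + (2-2*ε)*P) - (t:ℝ) - 1) / (1-2*ε) := by
      rw [← hP]
      field_simp
      ring
    push_cast
    rw [hDiv1]
    calc b (t+1) ≤ b t * (1 + (2-2*ε)/(t:ℝ)) + R^2 := hstep
      _ ≤ (X * ((t:ℝ)/(N:ℝ))^(2-2*ε) + R^2 * (c * (t:ℝ)^(2-2*ε) - (t:ℝ)) / (1-2*ε)) * (1 + (2-2*ε)/(t:ℝ)) + R^2 := by linarith [h2]
      _ = X * ((P * (t:ℝ) + (2-2*ε)*P)/M) + R^2 * (c * (P * (t:ℝ) + (2-2*ε)*P) - (t:ℝ) - 1) / (1-2*ε) := by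
          rw [hDiv, hA, hLHSeq]
      _ ≤ X * (Q/M) + R^2 * (c * Q - (t:ℝ) - 1) / (1-2*ε) := by gcongr
      _ = X * (Q/M) + R^2 * (c * Q - ((t:ℝ)+1)) / (1-2*ε) := by ring


lemma pdm_Geq {al R N ga TB NB T e : ℝ} (hal : al ≠ 0) (hN : N ≠ 0) (hga : ga ≠ 0)
    (hTB : TB ≠ 0) (hNB : NB ≠ 0) (hT : T ≠ 0) (hb : 2*e-1 ≠ 0) (hh : 1-2*e ≠ 0) :
    al^2 * (R^2/ga^2) * (NB*N) * (1 + (al⁻¹^2 * N⁻¹/(2*e-1)) * (TB/NB - 1))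
      = ((al*(R*N))^2 * (T/TB/(N/NB)) + R^2 * (NB * (T/TB) - T)/(1-2*e)) * (TB/T) / ga^2 := by
  field_simp
  ring

lemma pdm_start {ga T TB : ℝ} (hga : ga ≠ 0) (hT : T ≠ 0) :
    TB * T = (ga^2 * T^2) * (TB/T) / ga^2 := by
  field_simp

lemma pdm_heq {w x e : ℝ} (hb : 2*e-1 ≠ 0) (hh : 1-2*e ≠ 0) :
    (w / (2*e-1)) * (x - 1) = w * (1 - x) / (1-2*e) := by
  field_simp
  ring

set_option maxHeartbeats 1000000 in
theorem pdm_bound_small_eps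
    {E : Type*} [NormedAddCommGroup E] [InnerProductSpace ℝ E]
    {m : ℕ} (y : Fin m → E) (a : ℕ → E) (k : ℕ → Fin m) (u : E)
    (R γd ε : ℝ)
    (ha0 : a 0 = 0)
    (hupd : ∀ t : ℕ, a (t + 1) = a t + y (k t))
    (hmis0 : ⟪a 0, y (k 0)⟫_ℝ ≤ 0)
    (hmis : ∀ t : ℕ, 1 ≤ t → ⟪a t, y (k t)⟫_ℝ ≤ (1 - ε) * ‖a t‖ ^ 2 / t)
    (hR : ∀ j, ‖y j‖ ≤ R)
    (hu : ‖u‖ = 1)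
    (hγ : γd > 0)
    (hmargin : ∀ j, ⟪u, y j⟫_ℝ ≥ γd)
    (hε : 0 < ε) (hε2 : ε < 1 / 2) :
    ∀ N t : ℕ, 1 ≤ N → N ≤ t →
      (‖a N‖ / (R * N) ≤ 1) ∧
      ((t : ℝ) ^ (2 * ε) ≤
        (‖a N‖ / (R * N)) ^ 2 * (R ^ 2 / γd ^ 2) * (N : ℝ) ^ (2 * ε) *
          (1 + ((‖a N‖ / (R * N))⁻¹ ^ 2 * (N : ℝ)⁻¹ / (2 * ε - 1)) *
            (((t : ℝ) / N) ^ (2 * ε - 1) - 1))) ∧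
      ((t : ℝ) ≤ (N : ℝ) * ((‖a N‖ / (R * N)) * R / γd) ^ (1 / ε) *
        (1 + (‖a N‖ / (R * N))⁻¹ ^ 2 * (N : ℝ)⁻¹ / (1 - 2 * ε)) ^
          (1 / (2 * ε))) := by
  -- basic facts
  have hRγ : γd ≤ R := by
    have h1 := hmargin (k 0)
    have h2 := real_inner_le_norm u (y (k 0))
    have h3 := hR (k 0)
    rw [hu, one_mul] at h2
    linarith
  have hR0 : 0 < R := lt_of_lt_of_le hγ hRγ
  have hlow : ∀ t : ℕ, γd * t ≤ ‖a t‖ := by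
    have key : ∀ t : ℕ, γd * t ≤ ⟪u, a t⟫_ℝ := by
      intro t
      induction t with
      | zero => simp [ha0]
      | succ t ih =>
        rw [hupd t, inner_add_right]
        have := hmargin (k t)
        push_cast
        nlinarith
    intro t
    have h2 := real_inner_le_norm u (a t)
    rw [hu, one_mul] at h2
    exact le_trans (key t) h2
  have hup : ∀ t : ℕ, ‖a t‖ ≤ R * t := by
    intro t
    induction t with
    | zero => simp [ha0]
    | succ t ih =>
      rw [hupd t]
      have h1 := norm_add_le (a t) (y (k t))
      have h2 := hR (k t)
      push_cast
      nlinarith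
  have hrec : ∀ t : ℕ, 1 ≤ t → ‖a (t+1)‖^2 ≤ ‖a t‖^2 * (1 + (2 - 2*ε)/(t:ℝ)) + R^2 := by
    intro t ht
    have hT0 : (0:ℝ) < (t:ℝ) := by exact_mod_cast ht
    rw [hupd t, norm_add_sq_real]
    have h1 := hmis t ht
    have h2 : ‖y (k t)‖^2 ≤ R^2 := by
      have := hR (k t); nlinarith [norm_nonneg (y (k t))]
    have e : ‖a t‖^2 * (1 + (2 - 2*ε)/(t:ℝ)) = ‖a t‖^2 + 2*((1-ε) * ‖a t‖^2 / (t:ℝ)) := by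
      field_simp
    rw [e]; linarith
  intro N t hN hNt
  have hN0 : (0:ℝ) < (N:ℝ) := by exact_mod_cast hN
  have hT1 : (1:ℝ) ≤ (t:ℝ) := by exact_mod_cast le_trans hN hNt
  have hT0 : (0:ℝ) < (t:ℝ) := by linarith
  have hTN : (N:ℝ) ≤ (t:ℝ) := by exact_mod_cast hNt
  have haN : γd * (N:ℝ) ≤ ‖a N‖ := hlow N
  have haN0 : 0 < ‖a N‖ := lt_of_lt_of_le (by positivity) haN
  set α := ‖a N‖ / (R * (N:ℝ)) with hαdef
  have hα0 : 0 < α := div_pos haN0 (by positivity)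
  have hα1 : α ≤ 1 := (div_le_one (by positivity)).mpr (hup N)
  have hη : (0:ℝ) < 1 - 2*ε := by linarith
  have hβne : (2*ε - 1 : ℝ) ≠ 0 := by intro h; linarith [h]
  have hηne : (1 - 2*ε : ℝ) ≠ 0 := ne_of_gt hη
  have h2e : (0:ℝ) < 2*ε := by linarith
  have hXα : ‖a N‖ = α * (R * (N:ℝ)) := by
    rw [hαdef]; field_simp
  -- atoms
  set TB := (t:ℝ)^(2*ε-1) with hTBdef
  set NB := (N:ℝ)^(2*ε-1) with hNBdef
  have hTB0 : 0 < TB := Real.rpow_pos_of_pos hT0 _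
  have hNB0 : 0 < NB := Real.rpow_pos_of_pos hN0 _
  have e1 : (t:ℝ)^(2*ε) = TB * (t:ℝ) := by
    rw [show (2:ℝ)*ε = (2*ε-1)+1 by ring, Real.rpow_add_one (ne_of_gt hT0)]
  have e2 : (N:ℝ)^(2*ε) = NB * (N:ℝ) := by
    rw [show (2:ℝ)*ε = (2*ε-1)+1 by ring, Real.rpow_add_one (ne_of_gt hN0)]
  have e3 : ((t:ℝ)/(N:ℝ))^(2*ε-1) = TB/NB := Real.div_rpow hT0.le hN0.le _
  have e4 : (t:ℝ)^(2-2*ε) = (t:ℝ)/TB := by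
    rw [show (2:ℝ)-2*ε = 1-(2*ε-1) by ring, Real.rpow_sub hT0, Real.rpow_one]
  have e5 : (N:ℝ)^(2-2*ε) = (N:ℝ)/NB := by
    rw [show (2:ℝ)-2*ε = 1-(2*ε-1) by ring, Real.rpow_sub hN0, Real.rpow_one]
  have e6 : ((t:ℝ)/(N:ℝ))^(2-2*ε) = ((t:ℝ)/TB)/((N:ℝ)/NB) := by
    rw [Real.div_rpow hT0.le hN0.le, e4, e5]
  -- growth bound from induction
  have hS := pdm_aux_ind hε hε2 (sq_nonneg ‖a N‖) (fun n => ‖a n‖^2) N hN rfl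
    (fun s hs => hrec s (le_trans hN hs)) t hNt
  rw [e6, e4, hXα] at hS
  have hγT : γd^2 * (t:ℝ)^2 ≤ (α * (R * (N:ℝ)))^2 * ((t:ℝ)/TB/((N:ℝ)/NB))
      + R^2 * (NB * ((t:ℝ)/TB) - (t:ℝ)) / (1-2*ε) := by
    have h1 : (γd * (t:ℝ))^2 ≤ ‖a t‖^2 :=
      pow_le_pow_left₀ (by positivity) (hlow t) 2
    nlinarith [hS, h1]
  have hGeq := pdm_Geq (ne_of_gt hα0) (ne_of_gt hN0) (ne_of_gt hγ)
      (ne_of_gt hTB0) (ne_of_gt hNB0) (ne_of_gt hT0) hβne hηne (R := R) (T := (t:ℝ))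
  have hclaim2 : (t : ℝ) ^ (2 * ε) ≤
      α ^ 2 * (R ^ 2 / γd ^ 2) * (N : ℝ) ^ (2 * ε) *
        (1 + (α⁻¹ ^ 2 * (N : ℝ)⁻¹ / (2 * ε - 1)) *
          (((t : ℝ) / N) ^ (2 * ε - 1) - 1)) := by
    rw [e1, e2, e3, hGeq]
    calc TB * (t:ℝ) = (γd^2 * (t:ℝ)^2) * (TB/(t:ℝ)) / γd^2 := pdm_start (ne_of_gt hγ) (ne_of_gt hT0)
      _ ≤ ((α*(R*(N:ℝ)))^2 * ((t:ℝ)/TB/((N:ℝ)/NB)) + R^2 * (NB * ((t:ℝ)/TB) - (t:ℝ))/(1-2*ε)) * (TB/(t:ℝ)) / γd^2 := by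
          gcongr
  refine ⟨hα1, hclaim2, ?_⟩
  -- third claim
  have hx0 : (0:ℝ) ≤ ((t:ℝ)/(N:ℝ))^(2*ε-1) := Real.rpow_nonneg (by positivity) _
  have hx1 : ((t:ℝ)/(N:ℝ))^(2*ε-1) ≤ 1 :=
    Real.rpow_le_one_of_one_le_of_nonpos ((one_le_div hN0).mpr hTN) (by linarith)
  have hs0 : (0:ℝ) ≤ α⁻¹^2 * (N:ℝ)⁻¹ / (1-2*ε) := by positivity
  have hinner : (α⁻¹^2 * (N:ℝ)⁻¹ / (2*ε-1)) * (((t:ℝ)/(N:ℝ))^(2*ε-1) - 1)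
      ≤ α⁻¹^2 * (N:ℝ)⁻¹ / (1-2*ε) := by
    have heq : (α⁻¹^2 * (N:ℝ)⁻¹ / (2*ε-1)) * (((t:ℝ)/(N:ℝ))^(2*ε-1) - 1)
        = α⁻¹^2 * (N:ℝ)⁻¹ * (1 - ((t:ℝ)/(N:ℝ))^(2*ε-1)) / (1-2*ε) :=
      pdm_heq hβne hηne
    rw [heq]
    have hw : (0:ℝ) ≤ α⁻¹^2 * (N:ℝ)⁻¹ := by positivity
    have : α⁻¹^2 * (N:ℝ)⁻¹ * (1 - ((t:ℝ)/(N:ℝ))^(2*ε-1)) ≤ α⁻¹^2 * (N:ℝ)⁻¹ := by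
      nlinarith
    exact div_le_div_of_nonneg_right this hη.le
  have hGC : (t : ℝ) ^ (2 * ε) ≤
      α ^ 2 * (R ^ 2 / γd ^ 2) * (N : ℝ) ^ (2 * ε) *
        (1 + α⁻¹^2 * (N:ℝ)⁻¹ / (1-2*ε)) := by
    refine le_trans hclaim2 ?_
    gcongr
  have hC0 : (0:ℝ) ≤ α ^ 2 * (R ^ 2 / γd ^ 2) * (N : ℝ) ^ (2 * ε) *
      (1 + α⁻¹^2 * (N:ℝ)⁻¹ / (1-2*ε)) := by
    apply mul_nonneg (by positivity)
    linarith
  have hTle : (t:ℝ) ≤ (α ^ 2 * (R ^ 2 / γd ^ 2) * (N : ℝ) ^ (2 * ε) *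
      (1 + α⁻¹^2 * (N:ℝ)⁻¹ / (1-2*ε))) ^ (1/(2*ε)) := by
    have h := Real.rpow_le_rpow (by positivity) hGC (by positivity : (0:ℝ) ≤ 1/(2*ε))
    have eT : ((t:ℝ)^(2*ε))^(1/(2*ε)) = (t:ℝ) := by
      rw [← Real.rpow_mul hT0.le, mul_one_div, div_self (ne_of_gt h2e), Real.rpow_one]
    rwa [eT] at h
  have hCeq : (α ^ 2 * (R ^ 2 / γd ^ 2) * (N : ℝ) ^ (2 * ε) *
      (1 + α⁻¹^2 * (N:ℝ)⁻¹ / (1-2*ε))) ^ (1/(2*ε))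
      = (N:ℝ) * (α*R/γd)^(1/ε) * (1 + α⁻¹^2 * (N:ℝ)⁻¹ / (1-2*ε))^(1/(2*ε)) := by
    have hxnn : (0:ℝ) ≤ α*R/γd := by positivity
    have hNe : (0:ℝ) ≤ (N:ℝ)^(2*ε) := Real.rpow_nonneg hN0.le _
    have c1 : α ^ 2 * (R ^ 2 / γd ^ 2) * (N : ℝ) ^ (2 * ε) *
        (1 + α⁻¹^2 * (N:ℝ)⁻¹ / (1-2*ε))
        = (α*R/γd)^2 * ((N:ℝ)^(2*ε) * (1 + α⁻¹^2 * (N:ℝ)⁻¹ / (1-2*ε))) := by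
      ring
    rw [c1, Real.mul_rpow (by positivity) (mul_nonneg hNe (by linarith)),
      Real.mul_rpow hNe (by linarith)]
    have c2 : ((α*R/γd)^2 : ℝ)^(1/(2*ε)) = (α*R/γd)^(1/ε) := by
      rw [← Real.rpow_natCast (α*R/γd) 2, ← Real.rpow_mul hxnn]
      congr 1
      push_cast
      field_simp
    have c3 : ((N:ℝ)^(2*ε))^(1/(2*ε)) = (N:ℝ) := by
      rw [← Real.rpow_mul hN0.le, mul_one_div, div_self (ne_of_gt h2e), Real.rpow_one]
    rw [c2, c3]
    ring
  rw [hCeq] at hTle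
  exact hTle
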